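/- Let Q be a finite (left) quasifield with q elements and kernel K. If A, B, C, D ⊆ Q satisfy |A|·|B|·|C|·|D| > q⁴/(|K|−1), then every γ ∈ Q\{0} can be written as γ = a·b + c·d with a ∈ A, b ∈ B, c ∈ C, d ∈ D; that is, Q\{0} ⊆ A·B + C·D. -/

import Mathlib

/-- A finite (left) quasifield. -/
class Quasifield (Q : Type*) extends AddCommGroup Q, Mul Q, One Q where
  one_ne_zero : (1 : Q) ≠ 0
  one_mul : ∀ a : Q, 1 * a = a
  mul_one : ∀ a : Q, a * 1 = a
  zero_mul : ∀ a : Q, 0 * a = 0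
  mul_zero : ∀ a : Q, a * 0 = 0
  mul_ne_zero : ∀ a b : Q, a ≠ 0 → b ≠ 0 → a * b ≠ 0
  existsUnique_mul_left : ∀ a b : Q, a ≠ 0 → b ≠ 0 → ∃! x : Q, a * x = b
  existsUnique_mul_right : ∀ a b : Q, a ≠ 0 → b ≠ 0 → ∃! y : Q, y * a = b
  left_distrib : ∀ a b c : Q, a * (b + c) = a * b + a * c
  existsUnique_affine : ∀ a b c : Q, a ≠ b → ∃! x : Q, a * x = b * x + c

/-- The kernel of a quasifield. -/
def Quasifield.kernel (Q : Type*) [Quasifield Q] : Set Q :=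
  {k | (∀ x y : Q, (x + y) * k = x * k + y * k) ∧ ∀ x y : Q, (x * y) * k = x * (y * k)}

namespace QfAux

variable {Q : Type*} [Quasifield Q]

lemma mul_sub' (a x y : Q) : a * (x - y) = a * x - a * y := by
  have h1 := Quasifield.left_distrib a y (x - y)
  have h2 : y + (x - y) = x := by abel
  rw [h2] at h1
  rw [h1]; abel

lemma left_cancel {a : Q} (ha : a ≠ 0) {x y : Q} (h : a * x = a * y) : x = y := by
  by_contra hne
  have h1 : a * (x - y) = 0 := by rw [mul_sub', h, sub_self]
  exact Quasifield.mul_ne_zero a (x - y) ha (sub_ne_zero.mpr hne) h1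

lemma solve_right {w : Q} (b : Q) (hw : w ≠ 0) : ∃! y : Q, y * w = b := by
  by_cases hb : b = 0
  · subst hb
    refine ⟨0, Quasifield.zero_mul w, fun y hy => ?_⟩
    by_contra hy0
    exact Quasifield.mul_ne_zero y w hy0 hw hy
  · exact Quasifield.existsUnique_mul_right w b hw hb

lemma affine_zero {a b : Q} (hab : a ≠ b) {x : Q} (hx : a * x = b * x) : x = 0 := by
  obtain ⟨y, _, hu⟩ := Quasifield.existsUnique_affine a b 0 hab
  have h1 : a * x = b * x + 0 := by rw [hx, add_zero]
  have h2 : a * 0 = b * 0 + 0 := by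
    rw [Quasifield.mul_zero, Quasifield.mul_zero, add_zero]
  rw [hu x h1, hu 0 h2]

lemma zero_mem_kernel : (0 : Q) ∈ Quasifield.kernel Q := by
  constructor
  · intro x y
    rw [Quasifield.mul_zero, Quasifield.mul_zero, Quasifield.mul_zero, add_zero]
  · intro x y
    rw [Quasifield.mul_zero, Quasifield.mul_zero, Quasifield.mul_zero]

lemma one_mem_kernel : (1 : Q) ∈ Quasifield.kernel Q := by
  constructor
  · intro x y; rw [Quasifield.mul_one, Quasifield.mul_one, Quasifield.mul_one]
  · intro x y; rw [Quasifield.mul_one, Quasifield.mul_one]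

lemma kernel_mul_inj {t : Q} (ht : t ∈ Quasifield.kernel Q) (htz : t ≠ 0) :
    Function.Injective (fun z : Q => z * t) := by
  intro z z' hzz
  simp only at hzz
  have hsub : (z - z') * t = z * t - z' * t := by
    have h1 := ht.1 z' (z - z')
    have h2 : z' + (z - z') = z := by abel
    rw [h2] at h1
    rw [h1]; abel
  by_contra hne
  have h0 : (z - z') * t = 0 := by rw [hsub, hzz, sub_self]
  exact Quasifield.mul_ne_zero (z - z') t (sub_ne_zero.mpr hne) htz h0

variable [Fintype Q] [DecidableEq Q]

/-- The number of coefficient pairs `u` with `u.1 * p.1 + u.2 * p.2 = γ` is `q`,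
for `γ ≠ 0` and `p ≠ (0,0)`. -/
lemma card_curve (γ : Q) (hγ : γ ≠ 0) (p : Q × Q) (hp : p ≠ ((0 : Q), (0 : Q))) :
    (Finset.univ.filter (fun u : Q × Q => u.1 * p.1 + u.2 * p.2 = γ)).card
      = Fintype.card Q := by
  rw [← Finset.card_univ]
  by_cases h1 : p.1 = 0
  · have h2 : p.2 ≠ 0 := by
      intro h2; exact hp (Prod.ext h1 h2)
    have W : ∃! y : Q, y * p.2 = γ := solve_right γ h2
    refine Finset.card_bij' (fun u _ => u.1) (fun a _ => (a, W.exists.choose)) ?_ ?_ ?_ ?_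
    · intro a ha; exact Finset.mem_univ _
    · intro a ha
      simp only [Finset.mem_filter, Finset.mem_univ, true_and]
      rw [h1, Quasifield.mul_zero, zero_add]
      exact W.exists.choose_spec
    · intro u hu
      simp only [Finset.mem_filter, Finset.mem_univ, true_and] at hu
      rw [h1, Quasifield.mul_zero, zero_add] at hu
      have := W.unique (W.exists.choose_spec) hu
      exact Prod.ext rfl this
    · intro a ha; rfl
  · have W : ∀ c : Q, ∃! y : Q, y * p.1 = γ - c * p.2 := fun c => solve_right _ h1
    refine Finset.card_bij' (fun u _ => u.2)
      (fun c _ => ((W c).exists.choose, c)) ?_ ?_ ?_ ?_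
    · intro a ha; exact Finset.mem_univ _
    · intro c hc
      simp only [Finset.mem_filter, Finset.mem_univ, true_and]
      rw [(W c).exists.choose_spec]; abel
    · intro u hu
      simp only [Finset.mem_filter, Finset.mem_univ, true_and] at hu
      have hu1 : u.1 * p.1 = γ - u.2 * p.2 := by rw [← hu]; abel
      have := (W u.2).unique ((W u.2).exists.choose_spec) hu1
      exact Prod.ext this rfl
    · intro c hc; rfl

/-- The number of points `p` with `u.1*p.1+u.2*p.2 = v.1*p.1+v.2*p.2` is `q` for `u ≠ v`. -/
lemma card_agree (u v : Q × Q) (huv : u ≠ v) :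
    (Finset.univ.filter
      (fun p : Q × Q => u.1 * p.1 + u.2 * p.2 = v.1 * p.1 + v.2 * p.2)).card
      = Fintype.card Q := by
  rw [← Finset.card_univ]
  by_cases h1 : u.1 = v.1
  · have h2 : u.2 ≠ v.2 := by
      intro h2; exact huv (Prod.ext h1 h2)
    have hcond : ∀ p : Q × Q,
        (u.1 * p.1 + u.2 * p.2 = v.1 * p.1 + v.2 * p.2) ↔ p.2 = 0 := by
      intro p
      rw [h1, add_right_inj]
      constructor
      · intro h; exact affine_zero h2 h
      · intro h; rw [h, Quasifield.mul_zero, Quasifield.mul_zero]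
    refine Finset.card_bij' (fun p _ => p.1) (fun a _ => (a, 0)) ?_ ?_ ?_ ?_
    · intro a ha; exact Finset.mem_univ _
    · intro a ha
      simp only [Finset.mem_filter, Finset.mem_univ, true_and]
      exact (hcond (a, 0)).mpr rfl
    · intro p hp
      simp only [Finset.mem_filter, Finset.mem_univ, true_and] at hp
      exact Prod.ext rfl ((hcond p).mp hp).symm
    · intro a ha; rfl
  · have W : ∀ t : Q, ∃! s : Q, u.1 * s = v.1 * s + (v.2 * t - u.2 * t) :=
      fun t => Quasifield.existsUnique_affine u.1 v.1 (v.2 * t - u.2 * t) h1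
    refine Finset.card_bij' (fun p _ => p.2)
      (fun t _ => ((W t).exists.choose, t)) ?_ ?_ ?_ ?_
    · intro a ha; exact Finset.mem_univ _
    · intro t ht
      simp only [Finset.mem_filter, Finset.mem_univ, true_and]
      rw [(W t).exists.choose_spec]; abel
    · intro p hp
      simp only [Finset.mem_filter, Finset.mem_univ, true_and] at hp
      have hp1 : u.1 * p.1 = v.1 * p.1 + (v.2 * p.2 - u.2 * p.2) := by
        calc u.1 * p.1 = u.1 * p.1 + u.2 * p.2 - u.2 * p.2 := by abel
        _ = v.1 * p.1 + v.2 * p.2 - u.2 * p.2 := by rw [hp]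
        _ = v.1 * p.1 + (v.2 * p.2 - u.2 * p.2) := by abel
      have := (W p.2).unique ((W p.2).exists.choose_spec) hp1
      exact Prod.ext this rfl
    · intro t ht; rfl

end QfAux

namespace QfAux

variable {Q : Type*} [Quasifield Q] [Fintype Q] [DecidableEq Q]

/-- Sum over δ of product of indicators collapses to equality indicator. -/
lemma sum_ite_ite (a b : Q) :
    (∑ δ : Q, (if a = δ then (1:ℝ) else 0) * (if b = δ then (1:ℝ) else 0))
      = if a = b then (1:ℝ) else 0 := by
  have h : ∀ δ : Q, (if a = δ then (1:ℝ) else 0) * (if b = δ then (1:ℝ) else 0)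
      = if a = δ then (if b = δ then (1:ℝ) else 0) else 0 := by
    intro δ; split_ifs <;> simp
  rw [Finset.sum_congr rfl (fun δ _ => h δ), Finset.sum_ite_eq]
  simp only [Finset.mem_univ, if_true]
  by_cases hab : a = b
  · subst hab; simp
  · rw [if_neg (fun h => hab h.symm), if_neg hab]

/-- The key spectral estimate. -/
lemma star (γ : Q) (hγ : γ ≠ 0) (x : Q × Q → ℝ) (hx : ∑ u : Q × Q, x u = 0) :
    (((Quasifield.kernel Q).ncard : ℝ) - 1) *
      (∑ p : Q × Q,
        (∑ u : Q × Q, x u * (if u.1 * p.1 + u.2 * p.2 = γ then (1:ℝ) else 0)) ^ 2)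
    ≤ ((Fintype.card Q : ℝ) ^ 2 - (Fintype.card Q : ℝ)) * ∑ u : Q × Q, (x u) ^ 2 := by
  classical
  set qn := Fintype.card Q with hqn
  set F : Q → Q × Q → ℝ :=
    fun δ p => ∑ u : Q × Q, x u * (if u.1 * p.1 + u.2 * p.2 = δ then (1:ℝ) else 0)
    with hF
  -- Step A : orbit invariance
  have stepA : ∀ t : Q, t ∈ Quasifield.kernel Q → t ≠ 0 →
      (∑ p : Q × Q, (F (γ * t) p) ^ 2) = ∑ p : Q × Q, (F γ p) ^ 2 := by
    intro t ht htz
    have hinj := kernel_mul_inj ht htz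
    have hbij : Function.Bijective (fun z : Q => z * t) :=
      Finite.injective_iff_bijective.mp hinj
    let e : Q ≃ Q := Equiv.ofBijective _ hbij
    refine (Fintype.sum_equiv (e.prodCongr e)
      (fun p => (F γ p) ^ 2) (fun p => (F (γ * t) p) ^ 2) ?_).symm
    intro p
    have hphi : ∀ u : Q × Q,
        u.1 * (p.1 * t) + u.2 * (p.2 * t) = (u.1 * p.1 + u.2 * p.2) * t := by
      intro u
      rw [← ht.2 u.1 p.1, ← ht.2 u.2 p.2, ← ht.1]
    have : F (γ * t) ((e.prodCongr e) p) = F γ p := by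
      simp only [hF, Equiv.prodCongr_apply, Prod.map]
      refine Finset.sum_congr rfl fun u _ => ?_
      congr 1
      have he : e p.1 = p.1 * t := rfl
      have he2 : e p.2 = p.2 * t := rfl
      rw [he, he2, hphi]
      by_cases hc : u.1 * p.1 + u.2 * p.2 = γ
      · rw [if_pos hc, if_pos (by rw [hc])]
      · rw [if_neg hc, if_neg (fun h => hc (hinj h))]
    show F γ p ^ 2 = F (γ * t) ((e.prodCongr e) p) ^ 2
    rw [this]
  -- Step B : total over all δ
  have per_p : ∀ p : Q × Q, (∑ δ : Q, (F δ p) ^ 2)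
      = ∑ u : Q × Q, ∑ v : Q × Q, x u * x v *
          (if u.1 * p.1 + u.2 * p.2 = v.1 * p.1 + v.2 * p.2 then (1:ℝ) else 0) := by
    intro p
    have h1 : ∀ δ : Q, (F δ p) ^ 2 = ∑ u : Q × Q, ∑ v : Q × Q,
        (x u * (if u.1 * p.1 + u.2 * p.2 = δ then (1:ℝ) else 0)) *
        (x v * (if v.1 * p.1 + v.2 * p.2 = δ then (1:ℝ) else 0)) := by
      intro δ; rw [sq, hF]; exact Finset.sum_mul_sum _ _ _ _
    rw [Finset.sum_congr rfl (fun δ _ => h1 δ)]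
    rw [Finset.sum_comm]
    refine Finset.sum_congr rfl fun u _ => ?_
    rw [Finset.sum_comm]
    refine Finset.sum_congr rfl fun v _ => ?_
    have h2 : ∀ δ : Q,
        (x u * (if u.1 * p.1 + u.2 * p.2 = δ then (1:ℝ) else 0)) *
        (x v * (if v.1 * p.1 + v.2 * p.2 = δ then (1:ℝ) else 0))
        = x u * x v * ((if u.1 * p.1 + u.2 * p.2 = δ then (1:ℝ) else 0) *
            (if v.1 * p.1 + v.2 * p.2 = δ then (1:ℝ) else 0)) := fun δ => by ring
    rw [Finset.sum_congr rfl (fun δ _ => h2 δ), ← Finset.mul_sum, sum_ite_ite]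
  have stepB : (∑ δ : Q, ∑ p : Q × Q, (F δ p) ^ 2)
      = ((qn : ℝ) ^ 2 - (qn : ℝ)) * ∑ u : Q × Q, (x u) ^ 2 := by
    rw [Finset.sum_comm]
    rw [Finset.sum_congr rfl (fun p _ => per_p p)]
    rw [Finset.sum_comm]
    have h3 : ∀ u : Q × Q, ∑ p : Q × Q, ∑ v : Q × Q, x u * x v *
          (if u.1 * p.1 + u.2 * p.2 = v.1 * p.1 + v.2 * p.2 then (1:ℝ) else 0)
        = ∑ v : Q × Q, x u * x v *
            ((qn : ℝ) + ((qn:ℝ)^2 - qn) * (if u = v then (1:ℝ) else 0)) := by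
      intro u
      rw [Finset.sum_comm]
      refine Finset.sum_congr rfl fun v _ => ?_
      rw [← Finset.mul_sum]
      congr 1
      rw [Finset.sum_boole]
      by_cases huv : u = v
      · subst huv
        rw [if_pos rfl]
        have : (Finset.univ.filter
            (fun p : Q × Q => u.1 * p.1 + u.2 * p.2 = u.1 * p.1 + u.2 * p.2))
            = Finset.univ := by
          apply Finset.filter_true_of_mem; intro p _; rfl
        rw [this, Finset.card_univ, Fintype.card_prod]
        push_cast; ring
      · rw [if_neg huv, card_agree u v huv]
        push_cast; ring
    rw [Finset.sum_congr rfl (fun u _ => h3 u)]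
    have expand : ∀ u : Q × Q, ∑ v : Q × Q, x u * x v *
          ((qn : ℝ) + ((qn:ℝ)^2 - qn) * (if u = v then (1:ℝ) else 0))
        = (qn:ℝ) * (x u * ∑ v : Q × Q, x v) + ((qn:ℝ)^2 - qn) * (x u * x u) := by
      intro u
      have h4 : ∀ v : Q × Q, x u * x v *
          ((qn : ℝ) + ((qn:ℝ)^2 - qn) * (if u = v then (1:ℝ) else 0))
          = (qn:ℝ) * (x u * x v)
            + (if u = v then ((qn:ℝ)^2 - qn) * (x u * x v) else 0) := by
        intro v; split_ifs <;> ring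
      rw [Finset.sum_congr rfl (fun v _ => h4 v), Finset.sum_add_distrib,
        ← Finset.mul_sum, ← Finset.mul_sum, Finset.sum_ite_eq]
      simp only [Finset.mem_univ, if_true]
    rw [Finset.sum_congr rfl (fun u _ => expand u), Finset.sum_add_distrib]
    simp only [hx, mul_zero, zero_mul, Finset.sum_const_zero, zero_add]
    have hxx : ∀ u : Q × Q, ((qn:ℝ)^2 - qn) * (x u * x u) = ((qn:ℝ)^2 - qn) * (x u)^2 :=
      fun u => by ring
    rw [Finset.sum_congr rfl (fun u _ => hxx u), ← Finset.mul_sum]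
  -- Step C : assembling via the kernel orbit
  set KF : Finset Q :=
    (Finset.univ.filter (fun t : Q => t ∈ Quasifield.kernel Q)).erase 0 with hKF
  have hKFcard : (KF.card : ℝ) = ((Quasifield.kernel Q).ncard : ℝ) - 1 := by
    have h0 : (0:Q) ∈ Finset.univ.filter (fun t : Q => t ∈ Quasifield.kernel Q) := by
      simp [zero_mem_kernel]
    rw [hKF, Finset.card_erase_of_mem h0]
    have hnc : (Quasifield.kernel Q).ncard
        = (Finset.univ.filter (fun t : Q => t ∈ Quasifield.kernel Q)).card := by
      rw [Set.ncard_eq_toFinset_card (Quasifield.kernel Q) (Set.toFinite _)]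
      congr 1
      ext t
      simp only [Set.Finite.mem_toFinset, Finset.mem_filter, Finset.mem_univ, true_and]
    rw [← hnc]
    have hpos : 1 ≤ (Quasifield.kernel Q).ncard := by
      rw [hnc]
      exact Finset.card_pos.mpr ⟨0, h0⟩
    push_cast [Nat.cast_sub hpos]
    ring
  have hmemKF : ∀ t ∈ KF, t ∈ Quasifield.kernel Q ∧ t ≠ 0 := by
    intro t ht
    rw [hKF, Finset.mem_erase, Finset.mem_filter] at ht
    exact ⟨ht.2.2, ht.1⟩
  have hsum1 : (∑ t ∈ KF, ∑ p : Q × Q, (F (γ * t) p) ^ 2)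
      = (KF.card : ℝ) * ∑ p : Q × Q, (F γ p) ^ 2 := by
    rw [Finset.sum_congr rfl
      (fun t ht => stepA t (hmemKF t ht).1 (hmemKF t ht).2)]
    rw [Finset.sum_const, nsmul_eq_mul]
  have hsum2 : (∑ t ∈ KF, ∑ p : Q × Q, (F (γ * t) p) ^ 2)
      ≤ ∑ δ : Q, ∑ p : Q × Q, (F δ p) ^ 2 := by
    have hinj2 : ∀ t ∈ KF, ∀ t' ∈ KF, γ * t = γ * t' → t = t' :=
      fun t _ t' _ h => left_cancel hγ h
    calc (∑ t ∈ KF, ∑ p : Q × Q, (F (γ * t) p) ^ 2)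
        = ∑ δ ∈ KF.image (fun t => γ * t), ∑ p : Q × Q, (F δ p) ^ 2 :=
          (Finset.sum_image (g := fun t => γ * t)
            (f := fun δ => ∑ p : Q × Q, (F δ p) ^ 2) hinj2).symm
      _ ≤ ∑ δ : Q, ∑ p : Q × Q, (F δ p) ^ 2 := by
          apply Finset.sum_le_sum_of_subset_of_nonneg (Finset.subset_univ _)
          intro δ _ _
          exact Finset.sum_nonneg fun p _ => sq_nonneg _
  calc (((Quasifield.kernel Q).ncard : ℝ) - 1) * ∑ p : Q × Q, (F γ p) ^ 2
      = (∑ t ∈ KF, ∑ p : Q × Q, (F (γ * t) p) ^ 2) := by rw [hsum1, hKFcard]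
    _ ≤ ∑ δ : Q, ∑ p : Q × Q, (F δ p) ^ 2 := hsum2
    _ = ((qn : ℝ) ^ 2 - (qn : ℝ)) * ∑ u : Q × Q, (x u) ^ 2 := stepB

end QfAux

set_option maxHeartbeats 1000000 in
/-- Corollary 1.14: if `|A||B||C||D| > q⁴/(|K|-1)` then every nonzero `γ` is of the
form `a·b + c·d`; that is, `Q \ {0} ⊆ A·B + C·D`. -/
theorem stmt_9 {Q : Type*} [Quasifield Q] [Fintype Q] [DecidableEq Q]
    (A B C D : Finset Q)
    (h : (Fintype.card Q : ℝ) ^ 4 / (((Quasifield.kernel Q).ncard : ℝ) - 1) <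
      (A.card : ℝ) * B.card * C.card * D.card) :
    ∀ γ : Q, γ ≠ 0 → ∃ a ∈ A, ∃ b ∈ B, ∃ c ∈ C, ∃ d ∈ D, γ = a * b + c * d := by
  classical
  intro γ hγ
  by_contra hcon
  push_neg at hcon
  haveI hQnt : Nontrivial Q := ⟨⟨1, 0, Quasifield.one_ne_zero⟩⟩
  set qn := Fintype.card Q with hqn
  have hq2 : 2 ≤ qn := Fintype.one_lt_card
  set kn := (Quasifield.kernel Q).ncard with hkn
  have hk2 : 2 ≤ kn := by
    have hsub : ({0, 1} : Set Q) ⊆ Quasifield.kernel Q := by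
      intro z hz
      rcases hz with rfl | hz
      · exact QfAux.zero_mem_kernel
      · rw [Set.mem_singleton_iff] at hz; subst hz; exact QfAux.one_mem_kernel
    calc 2 = ({(0:Q), 1} : Set Q).ncard :=
        (Set.ncard_pair (fun h' => Quasifield.one_ne_zero h'.symm)).symm
    _ ≤ kn := Set.ncard_le_ncard hsub (Set.toFinite _)
  have hkq : kn ≤ qn := by
    calc kn ≤ (Set.univ : Set Q).ncard :=
        Set.ncard_le_ncard (Set.subset_univ _) (Set.toFinite _)
    _ = qn := by rw [Set.ncard_univ, Nat.card_eq_fintype_card]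
  set qr : ℝ := (qn : ℝ) with hqr
  set kr : ℝ := (kn : ℝ) with hkr
  have hqr2 : (2:ℝ) ≤ qr := by rw [hqr]; exact_mod_cast hq2
  have hqrpos : (0:ℝ) < qr := by linarith
  have hkr2 : (2:ℝ) ≤ kr := by rw [hkr]; exact_mod_cast hk2
  have hkrq : kr ≤ qr := by rw [hkr, hqr]; exact_mod_cast hkq
  have hk1pos : (0:ℝ) < kr - 1 := by linarith
  set ar : ℝ := (A.card : ℝ) with har
  set br : ℝ := (B.card : ℝ) with hbr
  set cr : ℝ := (C.card : ℝ) with hcr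
  set dr : ℝ := (D.card : ℝ) with hdr
  have hmain : qr ^ 4 < ar * br * cr * dr * (kr - 1) := by
    rw [div_lt_iff₀ hk1pos] at h
    exact h
  -- positivity
  have hbdnn : (0:ℝ) ≤ br * dr := by positivity
  have hacnn : (0:ℝ) ≤ ar * cr := by positivity
  have hprodpos : (0:ℝ) < (ar * cr) * ((br * dr) * (kr - 1)) := by
    have h0 : (0:ℝ) < qr ^ 4 := by positivity
    nlinarith [hmain]
  have hacpos : (0:ℝ) < ar * cr := by
    rcases lt_or_ge 0 (ar * cr) with h' | h'
    · exact h'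
    · exfalso
      have hY : (0:ℝ) ≤ (br * dr) * (kr - 1) := mul_nonneg hbdnn (le_of_lt hk1pos)
      nlinarith [hprodpos]
  have hbdpos : (0:ℝ) < br * dr := by
    rcases lt_or_ge 0 (br * dr) with h' | h'
    · exact h'
    · exfalso
      have hY : (br * dr) * (kr - 1) ≤ 0 := by nlinarith [h', hk1pos]
      nlinarith [hprodpos, hY, hacpos]
  have hacle : ar * cr ≤ qr ^ 2 := by
    have h1 : ar ≤ qr := by
      rw [har, hqr, hqn]; exact_mod_cast (Finset.card_le_univ A).trans_eq Finset.card_univ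
    have h2 : cr ≤ qr := by
      rw [hcr, hqr, hqn]; exact_mod_cast (Finset.card_le_univ C).trans_eq Finset.card_univ
    have h3 : (0:ℝ) ≤ ar := by positivity
    nlinarith
  have hbd_gt : qr < br * dr := by
    have e1 : ar * br * cr * dr * (kr - 1) = (ar * cr) * ((br * dr) * (kr - 1)) := by ring
    have e2 : (ar * cr) * ((br * dr) * (kr - 1)) ≤ qr ^ 2 * ((br * dr) * (kr - 1)) :=
      mul_le_mul_of_nonneg_right hacle (mul_nonneg hbdnn (le_of_lt hk1pos))
    have e3 : qr ^ 2 * ((br * dr) * (kr - 1)) ≤ qr ^ 2 * ((br * dr) * (qr - 1)) := by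
      have : (br * dr) * (kr - 1) ≤ (br * dr) * (qr - 1) :=
        mul_le_mul_of_nonneg_left (by linarith) hbdnn
      nlinarith [this]
    nlinarith [hmain, e1, e2, e3, hqrpos, hbdnn]
  -- the punctured point set
  set P : Finset (Q × Q) := (B ×ˢ D).erase ((0:Q), (0:Q)) with hP
  set Pc : ℝ := (P.card : ℝ) with hPcdef
  have hPc_ge : br * dr - 1 ≤ Pc := by
    by_cases hmem : ((0:Q),(0:Q)) ∈ B ×ˢ D
    · rw [hPcdef, hP, Finset.card_erase_of_mem hmem]
      have h1 : 1 ≤ (B ×ˢ D).card := Finset.card_pos.mpr ⟨_, hmem⟩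
      rw [Nat.cast_sub h1, Finset.card_product]
      rw [hbr, hdr]
      push_cast
      linarith
    · rw [hPcdef, hP, Finset.erase_eq_of_notMem hmem, Finset.card_product]
      rw [hbr, hdr]; push_cast; linarith
  have hPcpos : (0:ℝ) < Pc := by linarith
  -- the centered vector x
  set m : ℝ := ar * cr / qr ^ 2 with hm
  have hmpos : 0 < m := by rw [hm]; positivity
  set x : Q × Q → ℝ := fun u => (if u ∈ A ×ˢ C then (1:ℝ) else 0) - m with hxdef
  have hsum_ind : ∑ u : Q × Q, (if u ∈ A ×ˢ C then (1:ℝ) else 0) = ar * cr := by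
    rw [Finset.sum_boole, Finset.filter_univ_mem, Finset.card_product]
    rw [har, hcr]; push_cast; ring
  have hcardQ2 : ((Fintype.card (Q × Q) : ℝ)) = qr ^ 2 := by
    rw [Fintype.card_prod, hqr, hqn]; push_cast; ring
  have hxsum : ∑ u : Q × Q, x u = 0 := by
    rw [hxdef]
    rw [Finset.sum_sub_distrib, hsum_ind, Finset.sum_const, Finset.card_univ,
      nsmul_eq_mul, hcardQ2, hm]
    field_simp
    ring
  have hxsq : ∑ u : Q × Q, (x u) ^ 2 = ar * cr - (ar * cr) ^ 2 / qr ^ 2 := by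
    have hterm : ∀ u : Q × Q, (x u) ^ 2
        = (if u ∈ A ×ˢ C then (1:ℝ) else 0) * (1 - 2 * m) + m ^ 2 := by
      intro u; rw [hxdef]; dsimp only; split_ifs <;> ring
    rw [Finset.sum_congr rfl (fun u _ => hterm u), Finset.sum_add_distrib,
      ← Finset.sum_mul, hsum_ind, Finset.sum_const, Finset.card_univ,
      nsmul_eq_mul, hcardQ2, hm]
    field_simp
    ring
  -- evaluation of the solution count N
  have hinner : ∀ p ∈ P, (∑ u : Q × Q, (if u ∈ A ×ˢ C then (1:ℝ) else 0) *
        (if u.1 * p.1 + u.2 * p.2 = γ then (1:ℝ) else 0))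
      = (∑ u : Q × Q, x u * (if u.1 * p.1 + u.2 * p.2 = γ then (1:ℝ) else 0))
        + m * qr := by
    intro p hp
    have hp0 : p ≠ ((0:Q),(0:Q)) := Finset.ne_of_mem_erase hp
    have hcnt : ∑ u : Q × Q, (if u.1 * p.1 + u.2 * p.2 = γ then (1:ℝ) else 0) = qr := by
      rw [Finset.sum_boole, QfAux.card_curve γ hγ p hp0, hqr, hqn]
    have hsplit : ∀ u : Q × Q, (if u ∈ A ×ˢ C then (1:ℝ) else 0) *
          (if u.1 * p.1 + u.2 * p.2 = γ then (1:ℝ) else 0)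
        = x u * (if u.1 * p.1 + u.2 * p.2 = γ then (1:ℝ) else 0)
          + m * (if u.1 * p.1 + u.2 * p.2 = γ then (1:ℝ) else 0) := by
      intro u; rw [hxdef]; dsimp only; ring
    rw [Finset.sum_congr rfl (fun u _ => hsplit u), Finset.sum_add_distrib,
      ← Finset.mul_sum, hcnt]
  set N : ℝ := ∑ p ∈ P, ∑ u : Q × Q, (if u ∈ A ×ˢ C then (1:ℝ) else 0) *
      (if u.1 * p.1 + u.2 * p.2 = γ then (1:ℝ) else 0) with hN
  have hN0 : N = 0 := by
    rw [hN]
    apply Finset.sum_eq_zero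
    intro p hp
    apply Finset.sum_eq_zero
    intro u _
    by_cases h1 : u ∈ A ×ˢ C
    · by_cases h2 : u.1 * p.1 + u.2 * p.2 = γ
      · exfalso
        have hpBD := Finset.mem_of_mem_erase hp
        rw [Finset.mem_product] at hpBD h1
        exact hcon u.1 h1.1 p.1 hpBD.1 u.2 h1.2 p.2 hpBD.2 h2.symm
      · rw [if_neg h2, mul_zero]
    · rw [if_neg h1, zero_mul]
  set S : ℝ := ∑ p ∈ P,
      ∑ u : Q × Q, x u * (if u.1 * p.1 + u.2 * p.2 = γ then (1:ℝ) else 0) with hS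
  have hNeval : N = S + m * qr * Pc := by
    rw [hN, Finset.sum_congr rfl hinner, Finset.sum_add_distrib, Finset.sum_const,
      nsmul_eq_mul, hS, hPcdef]
    ring
  -- Cauchy–Schwarz
  set F : Q × Q → ℝ :=
    fun p => ∑ u : Q × Q, x u * (if u.1 * p.1 + u.2 * p.2 = γ then (1:ℝ) else 0)
    with hFdef
  have hCS : S ^ 2 ≤ Pc * ∑ p : Q × Q, (F p) ^ 2 := by
    have h1 := Finset.sum_mul_sq_le_sq_mul_sq P F (fun _ => (1:ℝ))
    simp only [mul_one, one_pow] at h1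
    have h2 : (∑ _p ∈ P, (1:ℝ)) = Pc := by
      rw [Finset.sum_const, nsmul_eq_mul, mul_one, hPcdef]
    have h3 : (∑ p ∈ P, (F p) ^ 2) ≤ ∑ p : Q × Q, (F p) ^ 2 :=
      Finset.sum_le_sum_of_subset_of_nonneg (Finset.subset_univ P)
        (fun _ _ _ => sq_nonneg _)
    calc S ^ 2 = (∑ p ∈ P, F p) ^ 2 := by rw [hS]
      _ ≤ (∑ p ∈ P, (F p) ^ 2) * (∑ _p ∈ P, (1:ℝ)) := h1
      _ = Pc * ∑ p ∈ P, (F p) ^ 2 := by rw [h2]; ring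
      _ ≤ Pc * ∑ p : Q × Q, (F p) ^ 2 :=
          mul_le_mul_of_nonneg_left h3 (le_of_lt hPcpos)
  have hstar := QfAux.star γ hγ x hxsum
  -- final arithmetic
  have h5 : kr - 1 ≤ qr ^ 2 - qr := by nlinarith
  have target1 : (qr ^ 2 - qr) * (qr ^ 2 - ar * cr) < (ar * cr) * Pc * (kr - 1) := by
    have t1 : (ar * cr) * (br * dr - 1) * (kr - 1) ≤ (ar * cr) * Pc * (kr - 1) := by
      have := mul_le_mul_of_nonneg_left hPc_ge (le_of_lt hacpos)
      exact mul_le_mul_of_nonneg_right this (le_of_lt hk1pos)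
    have t2 : (ar * cr) * (br * dr - 1) * (kr - 1)
        = ar * br * cr * dr * (kr - 1) - (ar * cr) * (kr - 1) := by ring
    have t3 : (ar * cr) * (kr - 1) ≤ (ar * cr) * (qr ^ 2 - qr) :=
      mul_le_mul_of_nonneg_left h5 (le_of_lt hacpos)
    have t4 : (qr ^ 2 - qr) * (qr ^ 2 - ar * cr)
        = qr ^ 4 - qr ^ 3 - (ar * cr) * (qr ^ 2 - qr) := by ring
    have hq3 : (0:ℝ) < qr ^ 3 := by positivity
    linarith [t1, t2, t3, t4, hmain, hq3]
  have hS2T2 : S ^ 2 < (m * qr * Pc) ^ 2 := by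
    have c1 : S ^ 2 * (kr - 1) ≤ (Pc * ∑ p : Q × Q, (F p) ^ 2) * (kr - 1) :=
      mul_le_mul_of_nonneg_right hCS (le_of_lt hk1pos)
    have c2 : (Pc * ∑ p : Q × Q, (F p) ^ 2) * (kr - 1)
        = Pc * ((kr - 1) * ∑ p : Q × Q, (F p) ^ 2) := by ring
    have c3 : Pc * ((kr - 1) * ∑ p : Q × Q, (F p) ^ 2)
        ≤ Pc * ((qr ^ 2 - qr) * ∑ u : Q × Q, (x u) ^ 2) :=
      mul_le_mul_of_nonneg_left hstar (le_of_lt hPcpos)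
    rw [hxsq] at c3
    have t5 : (qr ^ 2 - qr) * (qr ^ 2 - ar * cr) * (Pc * (ar * cr) / qr ^ 2)
        < (ar * cr) * Pc * (kr - 1) * (Pc * (ar * cr) / qr ^ 2) :=
      mul_lt_mul_of_pos_right target1 (div_pos (mul_pos hPcpos hacpos) (pow_pos hqrpos 2))
    have t6 : (qr ^ 2 - qr) * (qr ^ 2 - ar * cr) * (Pc * (ar * cr) / qr ^ 2)
        = Pc * ((qr ^ 2 - qr) * (ar * cr - (ar * cr) ^ 2 / qr ^ 2)) := by
      field_simp
    have t7 : (ar * cr) * Pc * (kr - 1) * (Pc * (ar * cr) / qr ^ 2)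
        = (m * qr * Pc) ^ 2 * (kr - 1) := by
      rw [hm]; field_simp
    have final : S ^ 2 * (kr - 1) < (m * qr * Pc) ^ 2 * (kr - 1) := by
      linarith [c1, c2, c3, t5, t6, t7]
    exact lt_of_mul_lt_mul_right (by linarith [final]) (le_of_lt hk1pos)
  -- contradiction
  have hSval : S = -(m * qr * Pc) := by linarith [hN0, hNeval]
  rw [hSval, neg_sq] at hS2T2
  exact lt_irrefl _ hS2T2
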